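/- Let C be the cluster category of a hereditary algebra H, T̄ an almost complete tilting object with the two complements M and M*, T = T̄ ⊕ M, and Γ = End_C(T)^op. Then the Γ-module Hom_C(T, τM*) is simple, and it is isomorphic to the simple top S_M of the indecomposable projective Γ-module Hom_C(T, M). -/

import Mathlib

open CategoryTheory Limits Pretriangulated Opposite

universe v u

/-- `X ∈ add T`: `X` is a direct summand of a finite direct sum of copies of `T`. -/
def memAddC {C : Type u} [Category.{v} C] [Preadditive C] [HasFiniteBiproducts C]
    (T X : C) : Prop :=
  ∃ (n : ℕ) (i : X ⟶ ⨁ (fun _ : Fin n => T)) (p : ⨁ (fun _ : Fin n => T) ⟶ X),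
    i ≫ p = 𝟙 X

/-- `T` is a tilting object: `Hom_C(T, X[1]) = 0` if and only if `X ∈ add T`. -/
def IsTiltingObject {C : Type u} [Category.{v} C] [Preadditive C] [HasFiniteBiproducts C]
    [HasShift C ℤ] (T : C) : Prop :=
  ∀ X : C, (∀ f : T ⟶ X⟦(1 : ℤ)⟧, f = 0) ↔ memAddC T X

/-- An object of an additive category is indecomposable if it is nonzero and its only
idempotent endomorphisms are `0` and the identity. -/
def IndecC {C : Type u} [Category.{v} C] [Preadditive C] [HasZeroObject C] (X : C) : Prop :=
  (¬ IsZero X) ∧ ∀ e : X ⟶ X, e ≫ e = e → e = 0 ∨ e = 𝟙 X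

/-- The `End X`-module structure on `unop X ⟶ Y` for `X : Cᵒᵖ` (the former Mathlib
instance `moduleEndLeft`), restored with its old meaning. -/
instance moduleEndLeftOpOld {C : Type u} [Category.{v} C] [Preadditive C] {X : Cᵒᵖ} {Y : C} :
    Module (End X) (unop X ⟶ Y) where
  smul r f := r.unop ≫ f
  one_smul _ := Category.id_comp _
  mul_smul _ _ _ := Category.assoc _ _ _
  smul_add _ _ _ := Preadditive.comp_add _ _ _ _ _ _
  smul_zero _ := Limits.comp_zero
  add_smul _ _ _ := Preadditive.add_comp _ _ _ _ _ _
  zero_smul _ := Limits.zero_comp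

/-- The former Mathlib `preadditiveCoyonedaObj` (for `X : Cᵒᵖ`), restored with its old meaning. -/
def preadditiveCoyonedaObjOld {C : Type u} [Category.{v} C] [Preadditive C] (X : Cᵒᵖ) :
    C ⥤ ModuleCat.{v} (End X) where
  obj Y := ModuleCat.of _ (unop X ⟶ Y)
  map f := ModuleCat.ofHom
    { toFun := fun g => g ≫ f
      map_add' := fun _ _ => Preadditive.add_comp _ _ _ _ _ _
      map_smul' := fun _ _ => Category.assoc _ _ _ }

section Aux

variable {C : Type u} [Category.{v} C] [Preadditive C]

/-- Postcomposition with an isomorphism, as a linear equivalence of Hom-modules. -/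
def postcompLinearEquiv (T : C) {Y Y' : C} (e : Y ≅ Y') :
    ((preadditiveCoyonedaObjOld (op T)).obj Y) ≃ₗ[End (op T)]
      ((preadditiveCoyonedaObjOld (op T)).obj Y') where
  toFun f := f ≫ e.hom
  map_add' f g := Preadditive.add_comp _ _ _ _ _ _
  map_smul' r f := Category.assoc _ _ _
  invFun g := g ≫ e.inv
  left_inv f := (Category.assoc _ _ _).trans ((congrArg (fun h => f ≫ h) e.hom_inv_id).trans (Category.comp_id _))
  right_inv g := (Category.assoc _ _ _).trans ((congrArg (fun h => g ≫ h) e.inv_hom_id).trans (Category.comp_id _))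

end Aux

/-- Let `C` be the cluster category of a hereditary algebra, `T̄` an almost complete tilting
object with the two complements `M` and `M*`, `T = T̄ ⊕ M` and `Γ = End_C(T)ᵒᵖ`.  There is a
triangle `M* → B → M → M*[1]` with `B → M` a minimal right `add T̄`-approximation, and
`Hom_C(M, M*[1])` is one-dimensional over `End_C(M)/Rad(M,M)`, i.e. a simple
`End_C(M)`-module.  Then the `Γ`-module `Hom_C(T, τM*)` is simple, and it is isomorphic to the
simple top `S_M` of the indecomposable projective `Γ`-module `Hom_C(T, M)` (equivalently, it is
a simple quotient of `Hom_C(T, M)`). -/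
theorem stmt13 {C : Type u} [Category.{v} C] [Preadditive C] [HasZeroObject C]
    [HasShift C ℤ] [∀ n : ℤ, (shiftFunctor C n).Additive] [Pretriangulated C]
    [HasFiniteBiproducts C]
    (τ : C ⥤ C) [τ.Additive] [τ.IsEquivalence] (hτ : τ ≅ shiftFunctor C (1 : ℤ))
    (Tbar M Mstar : C) (hM : IndecC M) (hMstar : IndecC Mstar)
    (hMM : ¬ Nonempty (M ≅ Mstar))
    (hT : IsTiltingObject (Tbar ⊞ M)) (hT' : IsTiltingObject (Tbar ⊞ Mstar))
    -- the triangle `M* → B → M → M*[1]`, with `B → M` a minimal right `add T̄`-approximation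
    (B : C) (hB : memAddC Tbar B)
    (a : Mstar ⟶ B) (b : B ⟶ M) (c : M ⟶ Mstar⟦(1 : ℤ)⟧)
    (htri : Triangle.mk a b c ∈ distTriang C)
    (happrox : ∀ (Z : C), memAddC Tbar Z → ∀ g : Z ⟶ M, ∃ u : Z ⟶ B, u ≫ b = g)
    (hmin : ∀ e : B ⟶ B, e ≫ b = b → IsIso e)
    -- `Hom_C(M, M*[1])` is one-dimensional over `End_C(M)/Rad(M,M)`, hence simple
    (hone : IsSimpleModule (End (op M))
      ((preadditiveCoyonedaObjOld (op M)).obj (Mstar⟦(1 : ℤ)⟧)))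
    (G : C ⥤ ModuleCat.{v} (End (op (Tbar ⊞ M))))
    (hG : G = preadditiveCoyonedaObjOld (op (Tbar ⊞ M))) :
    IsSimpleModule (End (op (Tbar ⊞ M))) (G.obj (τ.obj Mstar)) ∧
    ∃ π : G.obj M ⟶ G.obj (τ.obj Mstar), Function.Surjective π := by
  subst hG
  -- `Hom(T̄ ⊞ M*, M*[1]) = 0`
  have hTM' : ∀ f : Tbar ⊞ Mstar ⟶ Mstar⟦(1 : ℤ)⟧, f = 0 := by
    refine (hT' Mstar).mpr ?_
    refine ⟨1, biproduct.lift (fun _ => biprod.inr),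
      biproduct.desc (fun _ => biprod.snd), ?_⟩
    rw [biproduct.lift_desc]
    simp
  -- `Hom(T̄, M*[1]) = 0`
  have h0 : ∀ f : Tbar ⟶ Mstar⟦(1 : ℤ)⟧, f = 0 := by
    intro f
    have := hTM' (biprod.desc f 0)
    calc f = biprod.inl ≫ biprod.desc f 0 := by simp
    _ = biprod.inl ≫ (0 : Tbar ⊞ Mstar ⟶ Mstar⟦(1 : ℤ)⟧) := by rw [this]
    _ = 0 := by simp
  -- there is a nonzero morphism `M ⟶ M*[1]`
  have hMne : ∃ f : M ⟶ Mstar⟦(1 : ℤ)⟧, f ≠ 0 := by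
    haveI := hone
    haveI := IsSimpleModule.nontrivial (End (op M))
      ((preadditiveCoyonedaObjOld (op M)).obj (Mstar⟦(1 : ℤ)⟧))
    obtain ⟨f, hf⟩ := exists_ne
      (0 : ((preadditiveCoyonedaObjOld (op M)).obj (Mstar⟦(1 : ℤ)⟧)))
    exact ⟨f, hf⟩
  -- from simplicity: every nonzero element of `Hom(M, M*[1])` generates
  have hgenM : ∀ x : M ⟶ Mstar⟦(1 : ℤ)⟧, x ≠ 0 → ∀ g : M ⟶ Mstar⟦(1 : ℤ)⟧,
      ∃ e : End (op M), e.unop ≫ x = g := by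
    intro x hx g
    haveI := hone
    obtain ⟨e, he⟩ := IsSimpleModule.toSpanSingleton_surjective (End (op M))
      (M := ((preadditiveCoyonedaObjOld (op M)).obj (Mstar⟦(1 : ℤ)⟧)))
      (m := x) hx g
    exact ⟨e, he⟩
  -- `c ≠ 0`
  have hc : c ≠ 0 := by
    intro hc0
    obtain ⟨s, hs⟩ : ∃ s : M ⟶ B, 𝟙 M = s ≫ b :=
      Triangle.coyoneda_exact₃ _ htri (𝟙 M) (by simp only [Triangle.mk_mor₃, hc0]; exact Limits.comp_zero)
    obtain ⟨n, iB, pB, hip⟩ := hB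
    obtain ⟨f, hf⟩ := hMne
    apply hf
    have hz : pB ≫ b ≫ f = 0 := by
      apply biproduct.hom_ext'
      intro j
      simp only [comp_zero]
      exact h0 _
    have hs' : s ≫ b = 𝟙 M := hs.symm
    calc f = (s ≫ b) ≫ f := by rw [hs']; simp
    _ = s ≫ (iB ≫ pB) ≫ b ≫ f := by rw [hip]; simp
    _ = (s ≫ iB) ≫ (pB ≫ (b ≫ f)) := by simp
    _ = (s ≫ iB) ≫ 0 := by rw [hz]
    _ = 0 := by simp
  -- generation for the big module `Hom(T̄ ⊞ M, M*[1])`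
  have hgen : ∀ x : Tbar ⊞ M ⟶ Mstar⟦(1 : ℤ)⟧, x ≠ 0 →
      ∀ g : Tbar ⊞ M ⟶ Mstar⟦(1 : ℤ)⟧, ∃ r : End (op (Tbar ⊞ M)), r.unop ≫ x = g := by
    intro x hx g
    have hxM : biprod.inr ≫ x ≠ 0 := by
      intro h
      apply hx
      apply biprod.hom_ext'
      · rw [h0 (biprod.inl ≫ x)]; simp
      · rw [h]; simp
    obtain ⟨e, he⟩ := hgenM _ hxM (biprod.inr ≫ g)
    refine ⟨(biprod.map (0 : Tbar ⟶ Tbar) e.unop).op, ?_⟩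
    apply biprod.hom_ext'
    · rw [h0 (biprod.inl ≫ g)]
      show biprod.inl ≫ biprod.map 0 e.unop ≫ x = 0
      rw [← Category.assoc, biprod.inl_map, Category.assoc]
      simp
    · show biprod.inr ≫ biprod.map 0 e.unop ≫ x = biprod.inr ≫ g
      rw [← Category.assoc, biprod.inr_map, Category.assoc, he]
  -- simplicity of `Hom(T̄ ⊞ M, M*[1])`
  have hsimp : IsSimpleModule (End (op (Tbar ⊞ M)))
      ((preadditiveCoyonedaObjOld (op (Tbar ⊞ M))).obj (Mstar⟦(1 : ℤ)⟧)) := by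
    obtain ⟨f0, hf0⟩ := hMne
    have hg0 : (biprod.desc (0 : Tbar ⟶ Mstar⟦(1 : ℤ)⟧) f0 :
        Tbar ⊞ M ⟶ Mstar⟦(1 : ℤ)⟧) ≠ 0 := by
      intro h
      apply hf0
      calc f0 = biprod.inr ≫ biprod.desc (0 : Tbar ⟶ Mstar⟦(1 : ℤ)⟧) f0 := by simp
      _ = 0 := by rw [h]; simp
    haveI : Nontrivial (Submodule (End (op (Tbar ⊞ M)))
        ((preadditiveCoyonedaObjOld (op (Tbar ⊞ M))).obj (Mstar⟦(1 : ℤ)⟧))) := by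
      refine ⟨⊥, ⊤, fun h => hg0 ?_⟩
      have : (biprod.desc (0 : Tbar ⟶ Mstar⟦(1 : ℤ)⟧) f0 :
          Tbar ⊞ M ⟶ Mstar⟦(1 : ℤ)⟧) ∈ (⊥ : Submodule (End (op (Tbar ⊞ M)))
          ((preadditiveCoyonedaObjOld (op (Tbar ⊞ M))).obj (Mstar⟦(1 : ℤ)⟧))) := by
        rw [h]; trivial
      exact (Submodule.mem_bot _ (M := ((preadditiveCoyonedaObjOld (op (Tbar ⊞ M))).obj (Mstar⟦(1 : ℤ)⟧)))).mp this
    refine { eq_bot_or_eq_top := fun N => ?_ }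
    by_cases hN : N = ⊥
    · exact Or.inl hN
    · refine Or.inr ?_
      obtain ⟨x, hxN, hx⟩ := N.ne_bot_iff.mp hN
      refine eq_top_iff.mpr fun g _ => ?_
      obtain ⟨r, hr⟩ := hgen x hx g
      have : r • x ∈ N := N.smul_mem r hxN
      change r.unop ≫ x ∈ N at this
      rwa [hr] at this
  constructor
  · exact IsSimpleModule.congr
      (postcompLinearEquiv (Tbar ⊞ M) ((hτ.app Mstar).trans (Iso.refl _)))
      (N := ((preadditiveCoyonedaObjOld (op (Tbar ⊞ M))).obj (Mstar⟦(1 : ℤ)⟧)))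
  · refine ⟨(preadditiveCoyonedaObjOld (op (Tbar ⊞ M))).map (c ≫ (hτ.app Mstar).inv), ?_⟩
    intro y
    -- find `f : T̄ ⊞ M ⟶ M` with `f ≫ c = y ≫ (hτ.app Mstar).hom`
    obtain ⟨e, he⟩ := hgenM c hc (biprod.inr ≫ (y ≫ (hτ.app Mstar).hom))
    refine ⟨biprod.desc 0 e.unop, ?_⟩
    have hfc : (biprod.desc (0 : Tbar ⟶ M) e.unop) ≫ c = y ≫ (hτ.app Mstar).hom := by
      apply biprod.hom_ext'
      · rw [h0 (biprod.inl ≫ (y ≫ (hτ.app Mstar).hom))]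
        rw [← Category.assoc, biprod.inl_desc]
        simp
      · rw [← Category.assoc, biprod.inr_desc, he]
    show (biprod.desc (0 : Tbar ⟶ M) e.unop) ≫ (c ≫ (hτ.app Mstar).inv) = y
    rw [← Category.assoc, hfc]
    simp
    exact (Category.assoc _ _ _).trans ((congrArg (fun h => y ≫ h) (hτ.hom_inv_id_app Mstar)).trans (Category.comp_id _))
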